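/- If G = (X ∪ Y, E) is a bipartite chain graph with Tr(G) = m + 1, then G contains either K_{m,m} or K_{m,m}−e as an induced subgraph. -/

import Mathlib

/-- `A` dominates `B` in `G`: every vertex of `B` has a neighbour in `A`. -/
def SimpleGraph.Dominates {V : Type*} (G : SimpleGraph V) (A B : Finset V) : Prop :=
  ∀ b ∈ B, ∃ a ∈ A, G.Adj a b

/-- `P : Fin k → Finset V` is a transitive `k`-partition of `G`. -/
def SimpleGraph.IsTransitivePartition {V : Type*} (G : SimpleGraph V)
    {k : ℕ} (P : Fin k → Finset V) : Prop :=
  (∀ i, (P i).Nonempty) ∧ (∀ v : V, ∃! i, v ∈ P i) ∧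
  (∀ i j : Fin k, i < j → G.Dominates (P i) (P j))

/-- The transitivity `Tr(G)`: the largest `k` admitting a transitive `k`-partition. -/
noncomputable def SimpleGraph.transitivity {V : Type*} [Fintype V] (G : SimpleGraph V) : ℕ :=
  sSup {k : ℕ | ∃ P : Fin k → Finset V, G.IsTransitivePartition P}

/-- `H` is (isomorphic to) a subgraph of `G`. -/
def ContainsSubgraph {α β : Type*} (H : SimpleGraph α) (G : SimpleGraph β) : Prop :=
  ∃ f : α → β, Function.Injective f ∧ ∀ a b, H.Adj a b → G.Adj (f a) (f b)

/-- `H` is (isomorphic to) an induced subgraph of `G`. -/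
def ContainsInduced {α β : Type*} (H : SimpleGraph α) (G : SimpleGraph β) : Prop :=
  Nonempty (H ↪g G)

/-- The complete bipartite graph `K_{t,t}`. -/
def Ktt (t : ℕ) : SimpleGraph (Fin t ⊕ Fin t) := completeBipartiteGraph (Fin t) (Fin t)

/-- `K_{t,t}` minus one edge. -/
def KttMinusE (t : ℕ) : SimpleGraph (Fin t ⊕ Fin t) :=
  (Ktt t).deleteEdges {e | ∃ h : 0 < t, e = s(Sum.inl ⟨0, h⟩, Sum.inr ⟨0, h⟩)}

/-- A graph on `Fin m ⊕ Fin n` is a bipartite chain graph (w.r.t. the canonical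
orderings of the two sides): edges only go between the two sides, and
neighbourhoods are nested along each ordering. -/
def IsBipartiteChain {m n : ℕ} (G : SimpleGraph (Fin m ⊕ Fin n)) : Prop :=
  (∀ i j : Fin m, ¬ G.Adj (Sum.inl i) (Sum.inl j)) ∧
  (∀ i j : Fin n, ¬ G.Adj (Sum.inr i) (Sum.inr j)) ∧
  (∀ i j : Fin m, i ≤ j → ∀ y : Fin n, G.Adj (Sum.inl j) (Sum.inr y) → G.Adj (Sum.inl i) (Sum.inr y)) ∧
  (∀ i j : Fin n, i ≤ j → ∀ x : Fin m, G.Adj (Sum.inl x) (Sum.inr j) → G.Adj (Sum.inl x) (Sum.inr i))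


open Sum Finset

section Aux

variable {a b : ℕ} {G : SimpleGraph (Fin a ⊕ Fin b)}

lemma chain_nest (hchain : IsBipartiteChain G) {p p' : Fin a} {q q' : Fin b}
    (h : G.Adj (inl p) (inr q)) (hp : p' ≤ p) (hq : q' ≤ q) :
    G.Adj (inl p') (inr q') :=
  hchain.2.2.2 q' q hq p' (hchain.2.2.1 p' p hp q h)

lemma card_ge_of_lower {n c : ℕ} (S : Finset (Fin (n+1))) (hc : c ≤ n+1)
    (h : ∀ (i : ℕ) (hi : i < n+1), i < c → (⟨i, hi⟩ : Fin (n+1)) ∈ S) : c ≤ S.card := by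
  have key : (Finset.range c).card ≤ S.card := by
    apply Finset.card_le_card_of_injOn (fun i => (⟨min i n, by omega⟩ : Fin (n+1)))
    · intro i hi
      have hic := Finset.mem_range.mp hi
      have heq : (⟨min i n, by omega⟩ : Fin (n+1)) = ⟨i, by omega⟩ := by
        apply Fin.ext; simp; omega
      show (⟨min i n, _⟩ : Fin (n+1)) ∈ S
      rw [heq]; exact h i (by omega) hic
    · intro i hi j hj hij
      have hic := Finset.mem_range.mp hi
      have hjc := Finset.mem_range.mp hj
      have hv : min i n = min j n := congrArg Fin.val hij
      omega
  simpa using key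

lemma card_ge_of_lower_extra {n c : ℕ} (S : Finset (Fin (n+1))) (hc : c ≤ n+1)
    (h : ∀ (i : ℕ) (hi : i < n+1), i < c → (⟨i, hi⟩ : Fin (n+1)) ∈ S)
    (x : Fin (n+1)) (hx : x ∈ S) (hxc : c ≤ x.val) : c + 1 ≤ S.card := by
  have h1 : c ≤ (S.erase x).card := by
    apply card_ge_of_lower _ hc
    intro i hi hic
    refine Finset.mem_erase.mpr ⟨?_, h i hi hic⟩
    intro heq
    have := congrArg Fin.val heq
    simp at this
    omega
  have h2 := Finset.card_erase_add_one hx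
  omega

lemma max_val_ge {n c : ℕ} (T : Finset (Fin n)) (hT : c ≤ T.card) (hne : T.Nonempty) :
    c - 1 ≤ (T.max' hne).val := by
  by_contra hcon
  push_neg at hcon
  have hsub : T.image Fin.val ⊆ Finset.range (c-1) := by
    intro x hx
    obtain ⟨y, hy, rfl⟩ := Finset.mem_image.mp hx
    have := T.le_max' y hy
    rw [Fin.le_def] at this
    exact Finset.mem_range.mpr (by omega)
  have := Finset.card_le_card hsub
  rw [Finset.card_image_of_injective _ Fin.val_injective, Finset.card_range] at this
  omega

/-- Core counting lemma: a transitive `(m+1)`-partition of a chain graph forces the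
edge `x_{m-1} y_{m-2}` (top-indexed). -/
lemma half {m : ℕ} (hchain : IsBipartiteChain G)
    (hm : 2 ≤ m) {P : Fin (m+1) → Finset (Fin a ⊕ Fin b)} (hP : G.IsTransitivePartition P) :
    ∃ (r : Fin a) (q : Fin b), m - 1 ≤ r.val ∧ m - 2 ≤ q.val ∧ G.Adj (inl r) (inr q) := by
  classical
  obtain ⟨hne, huniq, hdom⟩ := hP
  set R : Fin (m+1) → Finset (Fin a) :=
    fun s => Finset.univ.filter (fun p => inl p ∈ P s) with hRdef
  set C : Fin (m+1) → Finset (Fin b) :=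
    fun s => Finset.univ.filter (fun q => inr q ∈ P s) with hCdef
  have hmemR : ∀ {s : Fin (m+1)} {p : Fin a}, p ∈ R s ↔ inl p ∈ P s := by
    intro s p; simp [hRdef]
  have hmemC : ∀ {s : Fin (m+1)} {q : Fin b}, q ∈ C s ↔ inr q ∈ P s := by
    intro s q; simp [hCdef]
  -- domination facts
  have dRC : ∀ s t : Fin (m+1), s < t → ∀ p ∈ R t, ∃ q ∈ C s, G.Adj (inl p) (inr q) := by
    intro s t hst p hp
    obtain ⟨u, hu, hadj⟩ := hdom s t hst (inl p) (hmemR.mp hp)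
    cases u with
    | inl p' => exact absurd hadj (hchain.1 p' p)
    | inr q' => exact ⟨q', hmemC.mpr hu, hadj.symm⟩
  have dCR : ∀ s t : Fin (m+1), s < t → ∀ q ∈ C t, ∃ p ∈ R s, G.Adj (inl p) (inr q) := by
    intro s t hst q hq
    obtain ⟨u, hu, hadj⟩ := hdom s t hst (inr q) (hmemC.mp hq)
    cases u with
    | inl p' => exact ⟨p', hmemR.mpr hu, hadj⟩
    | inr q' => exact absurd hadj (hchain.2.1 q' q)
  set SR : Finset (Fin (m+1)) := Finset.univ.filter (fun s => (R s).Nonempty) with hSRdef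
  set SC : Finset (Fin (m+1)) := Finset.univ.filter (fun s => (C s).Nonempty) with hSCdef
  have hmemSR : ∀ {s : Fin (m+1)}, s ∈ SR ↔ (R s).Nonempty := by
    intro s; simp [hSRdef]
  have hmemSC : ∀ {s : Fin (m+1)}, s ∈ SC ↔ (C s).Nonempty := by
    intro s; simp [hSCdef]
  have hL : m < m + 1 := by omega
  have hL1 : m - 1 < m + 1 := by omega
  have hL1L : (⟨m-1, hL1⟩ : Fin (m+1)) < ⟨m, hL⟩ := by
    rw [Fin.lt_def]; simp; omega
  obtain ⟨v, hv⟩ := hne ⟨m, hL⟩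
  -- both SR and SC have at least m elements
  have hcards : m ≤ SR.card ∧ m ≤ SC.card := by
    cases v with
    | inl p =>
      have hCol : ∀ s : Fin (m+1), s < ⟨m, hL⟩ → (C s).Nonempty := by
        intro s hs
        obtain ⟨u, hu, hadj⟩ := hdom s ⟨m, hL⟩ hs (inl p) hv
        cases u with
        | inl p' => exact absurd hadj (hchain.1 p' p)
        | inr q' => exact ⟨q', hmemC.mpr hu⟩
      have hSCcard : m ≤ SC.card := by
        apply card_ge_of_lower SC (by omega)
        intro i hi hic
        exact hmemSC.mpr (hCol ⟨i, hi⟩ (by rw [Fin.lt_def]; simpa))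
      obtain ⟨q1, hq1⟩ := hCol ⟨m-1, hL1⟩ hL1L
      have hRow : ∀ s : Fin (m+1), s < ⟨m-1, hL1⟩ → (R s).Nonempty := by
        intro s hs
        obtain ⟨p', hp', _⟩ := dCR s ⟨m-1, hL1⟩ hs q1 hq1
        exact ⟨p', hp'⟩
      have hSRcard : m ≤ SR.card := by
        have := card_ge_of_lower_extra SR (c := m-1) (by omega)
          (fun i hi hic => hmemSR.mpr (hRow ⟨i, hi⟩ (by rw [Fin.lt_def]; simpa)))
          ⟨m, hL⟩ (hmemSR.mpr ⟨p, hmemR.mpr hv⟩) (by simp)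
        omega
      exact ⟨hSRcard, hSCcard⟩
    | inr q =>
      have hRow : ∀ s : Fin (m+1), s < ⟨m, hL⟩ → (R s).Nonempty := by
        intro s hs
        obtain ⟨u, hu, hadj⟩ := hdom s ⟨m, hL⟩ hs (inr q) hv
        cases u with
        | inl p' => exact ⟨p', hmemR.mpr hu⟩
        | inr q' => exact absurd hadj (hchain.2.1 q' q)
      have hSRcard : m ≤ SR.card := by
        apply card_ge_of_lower SR (by omega)
        intro i hi hic
        exact hmemSR.mpr (hRow ⟨i, hi⟩ (by rw [Fin.lt_def]; simpa))
      obtain ⟨p1, hp1⟩ := hRow ⟨m-1, hL1⟩ hL1L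
      have hCol : ∀ s : Fin (m+1), s < ⟨m-1, hL1⟩ → (C s).Nonempty := by
        intro s hs
        obtain ⟨q', hq', _⟩ := dRC s ⟨m-1, hL1⟩ hs p1 hp1
        exact ⟨q', hq'⟩
      have hSCcard : m ≤ SC.card := by
        have := card_ge_of_lower_extra SC (c := m-1) (by omega)
          (fun i hi hic => hmemSC.mpr (hCol ⟨i, hi⟩ (by rw [Fin.lt_def]; simpa)))
          ⟨m, hL⟩ (hmemSC.mpr ⟨q, hmemC.mpr hv⟩) (by simp)
        omega
      exact ⟨hSRcard, hSCcard⟩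
  obtain ⟨hSRcard, hSCcard⟩ := hcards
  have hSRne : ∀ s ∈ SR, (R s).Nonempty := fun s hs => hmemSR.mp hs
  have hSCne : ∀ s ∈ SC, (C s).Nonempty := fun s hs => hmemSC.mp hs
  -- the set of per-class minimal rows
  set FR : {x // x ∈ SR} → Fin a := fun s => (R s.1).min' (hSRne s.1 s.2) with hFRdef
  have hFRinj : Function.Injective FR := by
    intro s t hst
    have h1 : inl (FR s) ∈ P s.1 := hmemR.mp (Finset.min'_mem _ (hSRne s.1 s.2))
    have h2 : inl (FR t) ∈ P t.1 := hmemR.mp (Finset.min'_mem _ (hSRne t.1 t.2))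
    rw [hst] at h1
    exact Subtype.ext (ExistsUnique.unique (huniq (inl (FR t))) h1 h2)
  set TR : Finset (Fin a) := SR.attach.image FR with hTRdef
  have hTRcard : m ≤ TR.card := by
    rw [hTRdef, Finset.card_image_of_injective _ hFRinj, Finset.card_attach]
    exact hSRcard
  have hTRne : TR.Nonempty := Finset.card_pos.mp (by omega)
  set rbar : Fin a := TR.max' hTRne with hrbardef
  have hrbar : m - 1 ≤ rbar.val := max_val_ge TR hTRcard hTRne
  obtain ⟨s0x, _, hs0⟩ := Finset.mem_image.mp (TR.max'_mem hTRne)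
  rw [← hrbardef] at hs0
  have hrs0 : inl rbar ∈ P s0x.1 := by
    rw [← hs0]
    exact hmemR.mp (Finset.min'_mem _ (hSRne s0x.1 s0x.2))
  -- rbar is adjacent to the minimal column of every other column-class
  have hadjall : ∀ s : Fin (m+1), ∀ hsC : s ∈ SC, s ≠ s0x.1 →
      G.Adj (inl rbar) (inr ((C s).min' (hSCne s hsC))) := by
    intro s hsC hne0
    rcases lt_or_gt_of_ne hne0 with hlt | hgt
    · obtain ⟨q', hq', hadj⟩ := dRC s s0x.1 hlt rbar (hmemR.mpr hrs0)
      exact chain_nest hchain hadj (le_refl _) (Finset.min'_le _ _ hq')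
    · obtain ⟨p', hp', hadj⟩ := dCR s0x.1 s hgt ((C s).min' (hSCne s hsC))
        (Finset.min'_mem _ _)
      have hle : rbar ≤ p' := by
        rw [← hs0]
        exact Finset.min'_le _ _ hp'
      exact chain_nest hchain hadj hle (le_refl _)
  set SC' : Finset (Fin (m+1)) := SC.erase s0x.1 with hSC'def
  have hSC'card : m - 1 ≤ SC'.card := by
    have h := Finset.pred_card_le_card_erase (s := SC) (a := s0x.1)
    rw [hSC'def]
    omega
  have hSC'ne : ∀ s ∈ SC', (C s).Nonempty :=
    fun s hs => hSCne s (Finset.mem_of_mem_erase hs)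
  set FQ : {x // x ∈ SC'} → Fin b := fun s => (C s.1).min' (hSC'ne s.1 s.2) with hFQdef
  have hFQinj : Function.Injective FQ := by
    intro s t hst
    have h1 : inr (FQ s) ∈ P s.1 := hmemC.mp (Finset.min'_mem _ (hSC'ne s.1 s.2))
    have h2 : inr (FQ t) ∈ P t.1 := hmemC.mp (Finset.min'_mem _ (hSC'ne t.1 t.2))
    rw [hst] at h1
    exact Subtype.ext (ExistsUnique.unique (huniq (inr (FQ t))) h1 h2)
  set Q : Finset (Fin b) := SC'.attach.image FQ with hQdef
  have hQcard : m - 1 ≤ Q.card := by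
    rw [hQdef, Finset.card_image_of_injective _ hFQinj, Finset.card_attach]
    exact hSC'card
  have hQne : Q.Nonempty := Finset.card_pos.mp (by omega)
  set qbar : Fin b := Q.max' hQne with hqbardef
  have hqbar : m - 2 ≤ qbar.val := by
    have := max_val_ge Q hQcard hQne
    omega
  obtain ⟨sx, _, hsx⟩ := Finset.mem_image.mp (Q.max'_mem hQne)
  rw [← hqbardef] at hsx
  have hadjq : G.Adj (inl rbar) (inr qbar) := by
    rw [← hsx]
    exact hadjall sx.1 (Finset.mem_of_mem_erase sx.2) (Finset.ne_of_mem_erase sx.2)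
  exact ⟨rbar, qbar, hrbar, hqbar, hadjq⟩

end Aux

section Swap

variable {a b : ℕ} {G : SimpleGraph (Fin a ⊕ Fin b)}

lemma chain_swap (h : IsBipartiteChain G) :
    IsBipartiteChain (G.comap (Sum.swap : Fin b ⊕ Fin a → Fin a ⊕ Fin b)) := by
  refine ⟨fun i j => h.2.1 i j, fun i j => h.1 i j, ?_, ?_⟩
  · intro i j hij y hadj
    have : G.Adj (inl y) (inr j) := hadj.symm
    exact (h.2.2.2 i j hij y this).symm
  · intro i j hij x hadj
    have : G.Adj (inl j) (inr x) := hadj.symm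
    exact (h.2.2.1 i j hij x this).symm

lemma part_swap {k : ℕ} {P : Fin k → Finset (Fin a ⊕ Fin b)}
    (hP : G.IsTransitivePartition P) :
    (G.comap (Sum.swap : Fin b ⊕ Fin a → Fin a ⊕ Fin b)).IsTransitivePartition
      (fun s => (P s).map ⟨Sum.swap, Sum.swap_leftInverse.injective⟩) := by
  obtain ⟨hne, huniq, hdom⟩ := hP
  have hmem : ∀ (v : Fin b ⊕ Fin a) (s : Fin k),
      v ∈ (P s).map ⟨Sum.swap, Sum.swap_leftInverse.injective⟩ ↔ Sum.swap v ∈ P s := by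
    intro v s
    rw [Finset.mem_map]
    constructor
    · rintro ⟨u, hu, rfl⟩
      simpa using hu
    · intro hv
      exact ⟨Sum.swap v, hv, Sum.swap_swap v⟩
  refine ⟨fun s => Finset.Nonempty.map (hne s), ?_, ?_⟩
  · intro v
    obtain ⟨i, hi, hun⟩ := huniq (Sum.swap v)
    exact ⟨i, (hmem v i).mpr hi, fun j hj => hun j ((hmem v j).mp hj)⟩
  · intro i j hij v hv
    obtain ⟨u, hu, hadj⟩ := hdom i j hij (Sum.swap v) ((hmem v j).mp hv)
    refine ⟨Sum.swap u, (hmem _ i).mpr (by simpa using hu), ?_⟩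
    simpa [SimpleGraph.comap] using hadj

lemma key {m : ℕ} (hchain : IsBipartiteChain G) (hm : 1 ≤ m)
    {P : Fin (m+1) → Finset (Fin a ⊕ Fin b)} (hP : G.IsTransitivePartition P) :
    ∃ (ha : m ≤ a) (hb : m ≤ b),
      G.Adj (inl ⟨m-1, by omega⟩) (inr ⟨m-2, by omega⟩) ∧
      G.Adj (inl ⟨m-2, by omega⟩) (inr ⟨m-1, by omega⟩) := by
  rcases eq_or_lt_of_le hm with hm1 | hm2
  · -- m = 1 : any edge nests down to (x₀, y₀)
    obtain ⟨hne, huniq, hdom⟩ := hP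
    have hL : m < m + 1 := by omega
    have h01 : (⟨0, by omega⟩ : Fin (m+1)) < ⟨m, hL⟩ := by
      rw [Fin.lt_def]; simpa using (by omega : 0 < m)
    obtain ⟨v, hv⟩ := hne ⟨m, hL⟩
    obtain ⟨u, hu, hadj⟩ := hdom _ _ h01 v hv
    have hedge : ∃ (p : Fin a) (q : Fin b), G.Adj (inl p) (inr q) := by
      cases u with
      | inl p =>
        cases v with
        | inl p' => exact absurd hadj (hchain.1 p p')
        | inr q' => exact ⟨p, q', hadj⟩
      | inr q =>
        cases v with
        | inl p' => exact ⟨p', q, hadj.symm⟩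
        | inr q' => exact absurd hadj (hchain.2.1 q q')
    obtain ⟨p, q, hpq⟩ := hedge
    have ha : m ≤ a := by have := p.isLt; omega
    have hb : m ≤ b := by have := q.isLt; omega
    have hcn : G.Adj (inl (⟨m-1, by omega⟩ : Fin a)) (inr (⟨m-2, by omega⟩ : Fin b)) := by
      apply chain_nest hchain hpq
      · exact Fin.le_def.mpr (by show m - 1 ≤ p.val; omega)
      · exact Fin.le_def.mpr (by show m - 2 ≤ q.val; omega)
    have hcn2 : G.Adj (inl (⟨m-2, by omega⟩ : Fin a)) (inr (⟨m-1, by omega⟩ : Fin b)) := by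
      apply chain_nest hchain hpq
      · exact Fin.le_def.mpr (by show m - 2 ≤ p.val; omega)
      · exact Fin.le_def.mpr (by show m - 1 ≤ q.val; omega)
    exact ⟨ha, hb, hcn, hcn2⟩
  · obtain ⟨r, q, hr, hq, hadj⟩ := half hchain hm2 hP
    obtain ⟨r', q', hr', hq', hadj'⟩ := half (chain_swap hchain) hm2 (part_swap hP)
    have ha : m ≤ a := by have := r.isLt; omega
    have hb : m ≤ b := by have := r'.isLt; omega
    have hadj'' : G.Adj (inl q') (inr r') := by
      have : G.Adj (inr r') (inl q') := hadj'
      exact this.symm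
    refine ⟨ha, hb, ?_, ?_⟩
    · apply chain_nest hchain hadj
      · exact Fin.le_def.mpr hr
      · exact Fin.le_def.mpr hq
    · apply chain_nest hchain hadj''
      · exact Fin.le_def.mpr hq'
      · exact Fin.le_def.mpr hr'

end Swap

/-- If `G` is a bipartite chain graph with `Tr(G) = m + 1`, then `G` contains
`K_{m,m}` or `K_{m,m} - e` as an induced subgraph. -/
theorem bipartiteChain_contains_of_transitivity {a b : ℕ} (G : SimpleGraph (Fin a ⊕ Fin b))
    (hchain : IsBipartiteChain G) (m : ℕ) (htr : G.transitivity = m + 1) :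
    ContainsInduced (Ktt m) G ∨ ContainsInduced (KttMinusE m) G := by
  classical
  rw [SimpleGraph.transitivity] at htr
  set S : Set ℕ := {k : ℕ | ∃ P : Fin k → Finset (Fin a ⊕ Fin b), G.IsTransitivePartition P}
    with hSdef
  have hbdd : BddAbove S := by
    refine ⟨Fintype.card (Fin a ⊕ Fin b), ?_⟩
    rintro k ⟨P, hP⟩
    have hinj : Function.Injective (fun i : Fin k => (hP.1 i).choose) := by
      intro i j hij
      have h1 : (hP.1 i).choose ∈ P i := (hP.1 i).choose_spec
      have h2 : (hP.1 i).choose ∈ P j := by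
        have := (hP.1 j).choose_spec
        simpa [← hij] using this
      exact ExistsUnique.unique (hP.2.1 ((hP.1 i).choose)) h1 h2
    calc k = Fintype.card (Fin k) := (Fintype.card_fin k).symm
      _ ≤ Fintype.card (Fin a ⊕ Fin b) := Fintype.card_le_of_injective _ hinj
  have hSne : S.Nonempty := by
    by_contra h
    rw [Set.not_nonempty_iff_eq_empty] at h
    rw [h] at htr
    simp at htr
  have hmem : m + 1 ∈ S := htr ▸ Nat.sSup_mem hSne hbdd
  obtain ⟨P, hP⟩ := hmem
  rcases Nat.eq_zero_or_pos m with rfl | hm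
  · -- m = 0 : the empty graph embeds trivially
    left
    refine ⟨⟨⟨fun x => x.elim Fin.elim0 Fin.elim0, ?_⟩, ?_⟩⟩
    · intro x
      cases x with
      | inl i => exact i.elim0
      | inr i => exact i.elim0
    · intro x
      cases x with
      | inl i => exact i.elim0
      | inr i => exact i.elim0
  · obtain ⟨ha, hb, h1, h2⟩ := key hchain hm hP
    by_cases hc : G.Adj (inl ⟨m-1, by omega⟩) (inr ⟨m-1, by omega⟩)
    · -- K_{m,m}
      left
      refine ⟨⟨⟨Sum.map (Fin.castLE ha) (Fin.castLE hb), ?_⟩, ?_⟩⟩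
      · exact Function.Injective.sumMap (Fin.castLE_injective ha) (Fin.castLE_injective hb)
      · intro x y
        cases x with
        | inl i =>
          cases y with
          | inl j =>
            simp only [Function.Embedding.coeFn_mk, Sum.map_inl]
            exact iff_of_false (hchain.1 _ _) (by simp [Ktt])
          | inr j =>
            simp only [Function.Embedding.coeFn_mk, Sum.map_inl, Sum.map_inr]
            refine iff_of_true ?_ (by simp [Ktt])
            apply chain_nest hchain hc
            · exact Fin.le_def.mpr (by show i.val ≤ m - 1; have := i.isLt; omega)
            · exact Fin.le_def.mpr (by show j.val ≤ m - 1; have := j.isLt; omega)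
        | inr i =>
          cases y with
          | inl j =>
            simp only [Function.Embedding.coeFn_mk, Sum.map_inl, Sum.map_inr]
            refine iff_of_true ?_ (by simp [Ktt])
            refine SimpleGraph.Adj.symm ?_
            apply chain_nest hchain hc
            · exact Fin.le_def.mpr (by show j.val ≤ m - 1; have := j.isLt; omega)
            · exact Fin.le_def.mpr (by show i.val ≤ m - 1; have := i.isLt; omega)
          | inr j =>
            simp only [Function.Embedding.coeFn_mk, Sum.map_inr]
            exact iff_of_false (hchain.2.1 _ _) (by simp [Ktt])
    · -- K_{m,m} - e
      right
      have hrev : ∀ i : Fin m, m - 1 - i.val < a := by intro i; omega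
      have hrev' : ∀ i : Fin m, m - 1 - i.val < b := by intro i; omega
      have hcross : ∀ (i j : Fin m), ¬(i.val = 0 ∧ j.val = 0) →
          G.Adj (inl ⟨m-1-i.val, hrev i⟩) (inr ⟨m-1-j.val, hrev' j⟩) := by
        intro i j hij
        rcases Decidable.em (i.val = 0) with hi0 | hi0
        · have hj0 : j.val ≠ 0 := fun h => hij ⟨hi0, h⟩
          apply chain_nest hchain h1
          · exact Fin.le_def.mpr (by show m - 1 - i.val ≤ m - 1; omega)
          · exact Fin.le_def.mpr (by show m - 1 - j.val ≤ m - 2; omega)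
        · apply chain_nest hchain h2
          · exact Fin.le_def.mpr (by show m - 1 - i.val ≤ m - 2; omega)
          · exact Fin.le_def.mpr (by show m - 1 - j.val ≤ m - 1; omega)
      have hcross0 : ∀ (i j : Fin m), (i.val = 0 ∧ j.val = 0) →
          ¬ G.Adj (inl ⟨m-1-i.val, hrev i⟩) (inr ⟨m-1-j.val, hrev' j⟩) := by
        rintro i j ⟨hi0, hj0⟩ hadj
        apply hc
        have e1 : (⟨m-1-i.val, hrev i⟩ : Fin a) = ⟨m-1, by omega⟩ := by
          apply Fin.ext; simp; omega
        have e2 : (⟨m-1-j.val, hrev' j⟩ : Fin b) = ⟨m-1, by omega⟩ := by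
          apply Fin.ext; simp; omega
        rwa [e1, e2] at hadj
      have hKm : ∀ (i j : Fin m), (KttMinusE m).Adj (inl i) (inr j) ↔ ¬(i.val = 0 ∧ j.val = 0) := by
        intro i j
        rw [KttMinusE, SimpleGraph.deleteEdges_adj]
        simp only [Ktt, completeBipartiteGraph_adj, Set.mem_setOf_eq]
        constructor
        · rintro ⟨-, hnot⟩ ⟨hi0, hj0⟩
          apply hnot
          refine ⟨hm, ?_⟩
          have : i = (⟨0, hm⟩ : Fin m) := Fin.ext hi0
          have hj : j = (⟨0, hm⟩ : Fin m) := Fin.ext hj0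
          rw [this, hj]
        · intro hnot
          refine ⟨by simp, ?_⟩
          rintro ⟨hpos, heq⟩
          rw [Sym2.eq_iff] at heq
          rcases heq with ⟨ha', hb'⟩ | ⟨ha', _⟩
          · exact hnot ⟨congrArg (fun x => Sum.elim Fin.val Fin.val x) ha',
              congrArg (fun x => Sum.elim Fin.val Fin.val x) hb'⟩
          · exact Sum.inl_ne_inr ha'
      refine ⟨⟨⟨Sum.map (fun i : Fin m => (⟨m-1-i.val, hrev i⟩ : Fin a))
          (fun j : Fin m => (⟨m-1-j.val, hrev' j⟩ : Fin b)), ?_⟩, ?_⟩⟩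
      · apply Function.Injective.sumMap
        · intro i j hij
          have := congrArg Fin.val hij
          simp at this
          apply Fin.ext
          omega
        · intro i j hij
          have := congrArg Fin.val hij
          simp at this
          apply Fin.ext
          omega
      · intro x y
        cases x with
        | inl i =>
          cases y with
          | inl j =>
            simp only [Function.Embedding.coeFn_mk, Sum.map_inl]
            refine iff_of_false (hchain.1 _ _) ?_
            rw [KttMinusE, SimpleGraph.deleteEdges_adj]
            simp [Ktt]
          | inr j =>
            simp only [Function.Embedding.coeFn_mk, Sum.map_inl, Sum.map_inr]
            rw [hKm i j]
            constructor
            · intro hadj hij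
              exact hcross0 i j hij hadj
            · intro hnot
              exact hcross i j hnot
        | inr i =>
          cases y with
          | inl j =>
            simp only [Function.Embedding.coeFn_mk, Sum.map_inl, Sum.map_inr]
            have : (KttMinusE m).Adj (inr i) (inl j) ↔ (KttMinusE m).Adj (inl j) (inr i) :=
              SimpleGraph.adj_comm _ _ _
            rw [this, hKm j i]
            constructor
            · intro hadj hij
              exact hcross0 j i hij hadj.symm
            · intro hnot
              exact (hcross j i hnot).symm
          | inr j =>
            simp only [Function.Embedding.coeFn_mk, Sum.map_inr]
            refine iff_of_false (hchain.2.1 _ _) ?_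
            rw [KttMinusE, SimpleGraph.deleteEdges_adj]
            simp [Ktt]
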